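/- Let d ≥ 2, let L be a finite set of affine functions ℝ^{d−1} → ℝ (each representing a non-vertical hyperplane in ℝ^d given by its graph), and let g : ℝ^{d−1} → ℝ be an affine function whose graph is contained in the corridor corr(L). Then there exists a subset H ⊆ L with |H| ≤ d + 1 such that the graph of g is contained in corr(H). -/

import Mathlib

noncomputable section

/-- The corridor of a set `L` of affine functions `ℝ^{d-1} → ℝ` (each representing a
non-vertical hyperplane in `ℝ^d` via its graph): the union of the graphs of all convex
combinations of functions in `L` (taken in the vector space of affine functions). -/
def corrD {E : Type*} [AddCommGroup E] [Module ℝ E]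
    (L : Set (E →ᵃ[ℝ] ℝ)) : Set (E × ℝ) :=
  {p | ∃ h ∈ convexHull ℝ L, p.2 = h p.1}

/-- The graph of an affine function `g : ℝ^{d-1} → ℝ`, a non-vertical hyperplane in `ℝ^d`. -/
def affGraph {E : Type*} [AddCommGroup E] [Module ℝ E]
    (g : E →ᵃ[ℝ] ℝ) : Set (E × ℝ) :=
  {p | p.2 = g p.1}

namespace CorridorAux

variable {n : ℕ}

/-- Coordinatization of affine maps `(Fin n → ℝ) →ᵃ[ℝ] ℝ`. -/
def T (n : ℕ) : ((Fin n → ℝ) →ᵃ[ℝ] ℝ) →ₗ[ℝ] (Fin n → ℝ) × ℝ where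
  toFun h := (fun i => h (Pi.single i 1) - h 0, h 0)
  map_add' h h' := by
    ext <;> simp [AffineMap.coe_add] <;> ring
  map_smul' c h := by
    ext <;> simp [AffineMap.coe_smul] <;> ring

lemma eval_T (h : (Fin n → ℝ) →ᵃ[ℝ] ℝ) (x : Fin n → ℝ) :
    h x = ∑ i, x i * (T n h).1 i + (T n h).2 := by
  have hd : ∀ y, h y = h.linear y + h 0 := by
    intro y; conv_lhs => rw [AffineMap.decomp h]
    simp
  have h1 : ∀ i, (T n h).1 i = h.linear (fun j => if i = j then (1:ℝ) else 0) := by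
    intro i
    have hs : (fun j => if i = j then (1:ℝ) else 0) = Pi.single i 1 :=
      funext fun j => by simp [Pi.single_apply, eq_comm]
    rw [hs]
    simp only [T, LinearMap.coe_mk, AddHom.coe_mk]
    rw [hd (Pi.single i 1)]; ring
  rw [hd x, LinearMap.pi_apply_eq_sum_univ h.linear x]
  simp only [smul_eq_mul, ← h1]
  rfl

lemma T_inj : Function.Injective (T n) := by
  intro h h' he
  ext x
  rw [eval_T h x, eval_T h' x, he]

end CorridorAux

open CorridorAux

/-- Dual Carathéodory: if the graph of `g` lies in the corridor of `L`, then it lies in the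
corridor of at most `d + 1` of the hyperplanes of `L`. -/
theorem hyperplane_in_corridor_caratheodory :
    ∀ d : ℕ, 2 ≤ d →
      ∀ L : Finset ((Fin (d - 1) → ℝ) →ᵃ[ℝ] ℝ),
        ∀ g : (Fin (d - 1) → ℝ) →ᵃ[ℝ] ℝ,
          affGraph g ⊆ corrD (↑L) →
          ∃ H : Finset ((Fin (d - 1) → ℝ) →ᵃ[ℝ] ℝ),
            H ⊆ L ∧ H.card ≤ d + 1 ∧ affGraph g ⊆ corrD (↑H) := by
  intro d hd L g hsub
  have hn : d - 1 + 1 = d := by omega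
  set w : (Fin (d-1) → ℝ) × ℝ := T (d-1) g with hw
  set S : Set ((Fin (d-1) → ℝ) × ℝ) := T (d-1) '' ↑L with hS
  set K : Set ((Fin (d-1) → ℝ) × ℝ) := convexHull ℝ S with hKdef
  -- the corridor hypothesis, pushed to coordinates
  have key : ∀ x : Fin (d-1) → ℝ,
      ∃ p ∈ K, ∑ i, x i * p.1 i + p.2 = ∑ i, x i * w.1 i + w.2 := by
    intro x
    obtain ⟨h, hh, hgx⟩ := hsub (a := (x, g x)) rfl
    refine ⟨T (d-1) h, ?_, ?_⟩
    · rw [hKdef, hS, ← (T (d-1)).image_convexHull]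
      exact Set.mem_image_of_mem _ hh
    · rw [← eval_T h x, ← eval_T g x, ← hgx]
  -- step 1: w ∈ K
  have hwK : w ∈ K := by
    by_contra hwK
    have hSfin : S.Finite := (L.finite_toSet).image _
    obtain ⟨f, u, hfa, hu⟩ :=
      geometric_hahn_banach_closed_point (convex_convexHull ℝ S)
        (hSfin.isCompact_convexHull ℝ).isClosed hwK
    set b : ℝ := f (0, 1) with hb
    set a : Fin (d-1) → ℝ := fun i => f (Pi.single i 1, 0) with ha
    have flin : ∀ p : (Fin (d-1) → ℝ) × ℝ, f p = ∑ i, p.1 i * a i + p.2 * b := by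
      intro p
      have hp : p = (∑ i, p.1 i • ((Pi.single i 1 : Fin (d-1) → ℝ), (0:ℝ)))
          + p.2 • ((0 : Fin (d-1) → ℝ), (1:ℝ)) := by
        ext j
        · simp [Prod.fst_sum, Finset.sum_apply, Pi.single_apply, mul_ite,
            Finset.sum_ite_eq, Finset.sum_ite_eq']
        · simp [Prod.snd_sum]
      conv_lhs => rw [hp]
      simp only [map_add, map_sum, map_smul, smul_eq_mul]
      rfl
    rcases eq_or_ne b 0 with hb0 | hb0
    · -- slope functional case
      obtain ⟨l₀, hl₀⟩ : ∃ l, l ∈ L := by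
        obtain ⟨p, hp, -⟩ := key 0
        rcases (convexHull_nonempty_iff.mp ⟨p, hp⟩) with ⟨q, hq⟩
        obtain ⟨l, hl, -⟩ := hq
        exact ⟨l, hl⟩
      have hne : (L.image (fun h => (T (d-1) h).2)).Nonempty :=
        ⟨_, Finset.mem_image_of_mem _ hl₀⟩
      set M : ℝ := (L.image (fun h => (T (d-1) h).2)).max' hne with hM
      have hKM : ∀ p ∈ K, p.2 ≤ M := by
        intro p hp
        have hsub2 : K ⊆ {q : (Fin (d-1) → ℝ) × ℝ | q.2 ≤ M} := by
          apply convexHull_min _ (convex_halfSpace_le (LinearMap.snd ℝ _ ℝ).isLinear M)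
          rintro q ⟨l, hl, rfl⟩
          simp only [Set.mem_setOf_eq, LinearMap.snd_apply]
          rw [hM]
          exact Finset.le_max' (L.image (fun h => (T (d-1) h).2)) _
            (Finset.mem_image_of_mem _ hl)
        exact hsub2 hp
      have hε0 : (0:ℝ) < f w - u := by linarith
      set t : ℝ := (|M - w.2| + 1) / (f w - u) with ht
      have ht0 : 0 < t := by positivity
      obtain ⟨p, hpK, hpe⟩ := key (t • a)
      have hfp : f p = ∑ i, p.1 i * a i := by rw [flin p, hb0]; ring
      have hfw : f w = ∑ i, w.1 i * a i := by rw [flin w, hb0]; ring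
      have he : t * f p + p.2 = t * f w + w.2 := by
        have e1 : ∑ i, (t • a) i * p.1 i = t * f p := by
          rw [hfp, Finset.mul_sum]
          exact Finset.sum_congr rfl fun i _ => by
            simp [mul_comm, mul_assoc, mul_left_comm]
        have e2 : ∑ i, (t • a) i * w.1 i = t * f w := by
          rw [hfw, Finset.mul_sum]
          exact Finset.sum_congr rfl fun i _ => by
            simp [mul_comm, mul_assoc, mul_left_comm]
        rw [← e1, ← e2]; exact hpe
      have h1 : f p < u := hfa p hpK
      have h2 : t * (f w - u) > M - w.2 := by
        rw [ht, div_mul_cancel₀ _ (ne_of_gt hε0)]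
        have := le_abs_self (M - w.2)
        linarith
      have h3 : p.2 ≤ M := hKM p hpK
      nlinarith
    · -- evaluation functional case
      obtain ⟨p, hpK, hpe⟩ := key (fun i => a i / b)
      have hfp : ∀ q : (Fin (d-1) → ℝ) × ℝ,
          f q = b * (∑ i, (a i / b) * q.1 i + q.2) := by
        intro q
        rw [flin q, mul_add, Finset.mul_sum]
        congr 1
        · exact Finset.sum_congr rfl fun i _ => by field_simp
        · ring
      have hpw : f p = f w := by rw [hfp p, hfp w, hpe]
      have h1 : f p < u := hfa p hpK
      linarith
  -- step 2: Carathéodory in coordinates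
  rw [hKdef, convexHull_eq_union] at hwK
  simp only [Set.mem_iUnion] at hwK
  obtain ⟨t, hts, hai, hwt⟩ := hwK
  set H : Finset ((Fin (d-1) → ℝ) →ᵃ[ℝ] ℝ) := L.filter (fun h => T (d-1) h ∈ t) with hH
  have hHL : H ⊆ L := Finset.filter_subset _ _
  have hHt : (H.image (fun h => T (d-1) h)) = t := by
    apply Finset.Subset.antisymm
    · intro q hq
      simp only [Finset.mem_image, hH, Finset.mem_filter] at hq
      obtain ⟨h, ⟨-, h2⟩, rfl⟩ := hq
      exact h2
    · intro q hq
      obtain ⟨h, hhL, rfl⟩ := hts hq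
      exact Finset.mem_image_of_mem _ (Finset.mem_filter.mpr ⟨hhL, hq⟩)
  have hcard : H.card ≤ d + 1 := by
    have hc1 : H.card = t.card := by
      rw [← hHt, Finset.card_image_of_injective _ T_inj]
    have hc2 : t.card ≤ Module.finrank ℝ ((Fin (d-1) → ℝ) × ℝ) + 1 := by
      have h3 := hai.card_le_finrank_succ
      rw [Fintype.card_coe] at h3
      exact h3.trans (by gcongr; exact Submodule.finrank_le _)
    have hfr : Module.finrank ℝ ((Fin (d-1) → ℝ) × ℝ) = (d-1) + 1 := by
      simp [Module.finrank_prod]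
    omega
  refine ⟨H, hHL, hcard, ?_⟩
  have hgH : g ∈ convexHull ℝ (↑H : Set _) := by
    have himg : w ∈ T (d-1) '' convexHull ℝ (↑H : Set _) := by
      rw [(T (d-1)).image_convexHull]
      have hcoe : (↑t : Set ((Fin (d-1) → ℝ) × ℝ)) = T (d-1) '' ↑H := by
        rw [← hHt]; simp [Finset.coe_image]
      rw [← hcoe]
      exact hwt
    obtain ⟨h, hh, hhe⟩ := himg
    rwa [← T_inj hhe]
  intro p hp
  exact ⟨g, hgH, hp⟩
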